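/- Let B be a commutative ring with an element ε satisfying ε² = 1, and let A = T(Bⁿ)/⟨eᵢ⊗eᵢ, eᵢ⊗eⱼ − ε eⱼ⊗eᵢ (i≠j)⟩ be the ε-exterior algebra. For 0 ≤ d ≤ n, let Λᵈ denote the B-submodule of A spanned by {e_I : I ⊆ [n], |I| = d}. Then A = ⊕_{d=0}^{n} Λᵈ as B-modules, i.e., the canonical map ⊕_{d=0}^{n} Λᵈ → A is an isomorphism. -/

import Mathlib

noncomputable section

open TensorAlgebra

/-- The `i`-th standard basis vector of the free module `Bⁿ`. -/
def stdB (B : Type*) [CommRing B] (n : ℕ) (i : Fin n) : Fin n → B := Pi.single i 1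

/-- The generating relations of the ε-exterior algebra:
`eᵢ ⊗ eᵢ = 0` and `eᵢ ⊗ eⱼ = ε • (eⱼ ⊗ eᵢ)` for `i ≠ j`. -/
inductive epsRel (B : Type*) [CommRing B] (n : ℕ) (ε : B) :
    TensorAlgebra B (Fin n → B) → TensorAlgebra B (Fin n → B) → Prop
  | sq (i : Fin n) :
      epsRel B n ε (ι B (stdB B n i) * ι B (stdB B n i)) 0
  | swap {i j : Fin n} (h : i ≠ j) :
      epsRel B n ε (ι B (stdB B n i) * ι B (stdB B n j))
        (ε • (ι B (stdB B n j) * ι B (stdB B n i)))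

/-- The ε-exterior algebra: the quotient of the tensor algebra `T(Bⁿ)` by the
two-sided ideal generated by the relations `epsRel`. -/
abbrev EpsExt (B : Type*) [CommRing B] (n : ℕ) (ε : B) : Type _ :=
  RingQuot (epsRel B n ε)

/-- The image of the basis vector `eᵢ` in the ε-exterior algebra. -/
def epsGen (B : Type*) [CommRing B] (n : ℕ) (ε : B) (i : Fin n) : EpsExt B n ε :=
  RingQuot.mkAlgHom B (epsRel B n ε) (ι B (stdB B n i))

/-- `e_I = e_{i₁} ⋯ e_{i_d}` for `I = {i₁ < ⋯ < i_d}` (with `e_∅ = 1`). -/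
def eI (B : Type*) [CommRing B] (n : ℕ) (ε : B) (I : Finset (Fin n)) : EpsExt B n ε :=
  ((I.sort (· ≤ ·)).map (epsGen B n ε)).prod

/-- The `d`-th exterior power: the `B`-submodule of the ε-exterior algebra spanned
by the `e_I` with `|I| = d`. -/
def epsPower (B : Type*) [CommRing B] (n : ℕ) (ε : B) (d : ℕ) :
    Submodule B (EpsExt B n ε) :=
  Submodule.span B {x | ∃ I : Finset (Fin n), I.card = d ∧ x = eI B n ε I}

namespace EpsAux

variable {B : Type*} [CommRing B] {n : ℕ} (ε : B)

/-! ### Basic relations among the generators -/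

/-- Shorthand for the product of generators along a list. -/
def prodL (B : Type*) [CommRing B] (n : ℕ) (ε : B) (l : List (Fin n)) : EpsExt B n ε :=
  (l.map (epsGen B n ε)).prod

@[simp] lemma prodL_nil : prodL B n ε [] = 1 := rfl

@[simp] lemma prodL_cons (i : Fin n) (l : List (Fin n)) :
    prodL B n ε (i :: l) = epsGen B n ε i * prodL B n ε l := rfl

lemma epsGen_sq (i : Fin n) : epsGen B n ε i * epsGen B n ε i = 0 := by
  have h := RingQuot.mkAlgHom_rel B (epsRel.sq (B := B) (n := n) (ε := ε) i)
  simpa [epsGen, map_mul] using h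

lemma epsGen_swap {i j : Fin n} (h : i ≠ j) :
    epsGen B n ε i * epsGen B n ε j = ε • (epsGen B n ε j * epsGen B n ε i) := by
  have h2 := RingQuot.mkAlgHom_rel B (epsRel.swap (B := B) (n := n) (ε := ε) h)
  simpa [epsGen, map_mul, map_smul] using h2

lemma eI_of_sorted {l : List (Fin n)} (hl : l.Pairwise (· < ·)) :
    eI B n ε l.toFinset = prodL B n ε l := by
  rw [eI, (List.toFinset_sort (· ≤ ·) hl.nodup).mpr (hl.imp le_of_lt)]
  rfl

/-- Straightening a product of generators: multiplying a sorted monomial by a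
generator kills it (if the index already occurs) or inserts the index up to a
power of `ε`. -/
lemma epsGen_mul_prodL (i : Fin n) :
    ∀ l : List (Fin n), l.Pairwise (· < ·) →
      (i ∈ l → epsGen B n ε i * prodL B n ε l = 0) ∧
      (i ∉ l → ∃ k : ℕ, epsGen B n ε i * prodL B n ε l
        = ε ^ k • prodL B n ε (l.orderedInsert (· ≤ ·) i)) := by
  intro l
  induction l with
  | nil =>
      refine fun _ => ⟨fun h => absurd h List.not_mem_nil, fun _ => ⟨0, ?_⟩⟩
      simp [List.orderedInsert]
  | cons j t ih =>
      intro hs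
      have ht : t.Pairwise (· < ·) := hs.of_cons
      have hjt : ∀ b ∈ t, j < b := fun b hb => List.rel_of_pairwise_cons hs hb
      obtain ⟨ih1, ih2⟩ := ih ht
      rcases lt_trichotomy i j with hij | rfl | hji
      · constructor
        · intro hmem
          rcases List.mem_cons.mp hmem with rfl | hmem
          · exact absurd hij (lt_irrefl _)
          · exact absurd (hjt i hmem) (not_lt.mpr hij.le)
        · intro _
          refine ⟨0, ?_⟩
          rw [List.orderedInsert, if_pos hij.le]
          simp
      · constructor
        · intro _
          rw [prodL_cons, ← mul_assoc, epsGen_sq, zero_mul]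
        · intro hmem; exact absurd List.mem_cons_self hmem
      · have key : epsGen B n ε i * prodL B n ε (j :: t)
            = ε • (epsGen B n ε j * (epsGen B n ε i * prodL B n ε t)) := by
          rw [prodL_cons, ← mul_assoc, epsGen_swap ε (ne_of_gt hji), smul_mul_assoc, mul_assoc]
        constructor
        · intro hmem
          rcases List.mem_cons.mp hmem with rfl | hmem
          · exact absurd hji (lt_irrefl _)
          · rw [key, ih1 hmem, mul_zero, smul_zero]
        · intro hmem
          have hit : i ∉ t := fun h => hmem (List.mem_cons_of_mem _ h)
          obtain ⟨k, hk⟩ := ih2 hit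
          refine ⟨k + 1, ?_⟩
          rw [key, hk, mul_smul_comm, smul_smul, ← pow_succ']
          rw [List.orderedInsert, if_neg (not_le.mpr hji)]
          rfl

/-! ### The representation on the free module with basis the finsets -/

/-- ε-wedging by `eᵢ` on the free module with basis the finsets. -/
def Lop (i : Fin n) : (Finset (Fin n) →₀ B) →ₗ[B] (Finset (Fin n) →₀ B) :=
  Finsupp.lsum B fun I =>
    if i ∈ I then (0 : B →ₗ[B] (Finset (Fin n) →₀ B))
    else (ε ^ (I.filter (· < i)).card) • Finsupp.lsingle (insert i I)

lemma Lop_single (i : Fin n) (I : Finset (Fin n)) (b : B) :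
    Lop ε i (Finsupp.single I b)
      = if i ∈ I then 0
        else ε ^ (I.filter (· < i)).card • Finsupp.single (insert i I) b := by
  rw [Lop, Finsupp.lsum_single]
  split_ifs <;> simp

lemma Lop_comp_self (i : Fin n) : Lop ε i ∘ₗ Lop ε i = 0 := by
  apply Finsupp.lhom_ext
  intro I b
  simp only [LinearMap.comp_apply, LinearMap.zero_apply, Lop_single]
  split_ifs with h
  · simp
  · rw [map_smul, Lop_single, if_pos (Finset.mem_insert_self i I), smul_zero]

lemma Lop_comp_swap (hε : ε ^ 2 = 1) {i j : Fin n} (h : i ≠ j) :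
    Lop ε i ∘ₗ Lop ε j = ε • (Lop ε j ∘ₗ Lop ε i) := by
  apply Finsupp.lhom_ext
  intro I b
  simp only [LinearMap.comp_apply, LinearMap.smul_apply]
  rw [Lop_single, Lop_single]
  by_cases hj : j ∈ I
  · rw [if_pos hj, map_zero]
    by_cases hi : i ∈ I
    · rw [if_pos hi, map_zero, smul_zero]
    · rw [if_neg hi, map_smul, Lop_single,
        if_pos (Finset.mem_insert_of_mem hj), smul_zero, smul_zero]
  · rw [if_neg hj]
    by_cases hi : i ∈ I
    · rw [if_pos hi, map_zero, map_smul, Lop_single,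
        if_pos (Finset.mem_insert_of_mem hi)]
      simp
    · rw [if_neg hi, map_smul, map_smul, Lop_single, Lop_single,
        if_neg (by simp [Finset.mem_insert, h, hi]),
        if_neg (by simp [Finset.mem_insert, Ne.symm h, hj])]
      rw [smul_smul, smul_smul, smul_smul, Finset.insert_comm]
      congr 1
      have hci : ((insert j I).filter (· < i)).card
          = if j < i then (I.filter (· < i)).card + 1 else (I.filter (· < i)).card := by
        rw [Finset.filter_insert]
        split_ifs with h1
        · rw [Finset.card_insert_of_notMem (fun hc => hj (Finset.mem_of_mem_filter _ hc))]
        · rfl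
      have hcj : ((insert i I).filter (· < j)).card
          = if i < j then (I.filter (· < j)).card + 1 else (I.filter (· < j)).card := by
        rw [Finset.filter_insert]
        split_ifs with h1
        · rw [Finset.card_insert_of_notMem (fun hc => hi (Finset.mem_of_mem_filter _ hc))]
        · rfl
      set ci := (I.filter (· < i)).card
      set cj := (I.filter (· < j)).card
      rcases h.lt_or_gt with hij | hji
      · rw [hci, if_neg (not_lt.mpr hij.le), hcj, if_pos hij]
        have h2 : ε * ε ^ ci * ε ^ (cj + 1) = ε ^ (cj + ci) * ε ^ 2 := by ring
        rw [h2, hε, mul_one, ← pow_add]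
      · rw [hci, if_pos hji, hcj, if_neg (not_lt.mpr hji.le)]
        have h2 : ε * ε ^ ci * ε ^ cj = ε ^ (cj + (ci + 1)) := by ring
        rw [h2, ← pow_add]

/-- The linear map `Bⁿ → End(M)` sending `v` to `∑ vᵢ Lᵢ`. -/
def fEnd : (Fin n → B) →ₗ[B] Module.End B (Finset (Fin n) →₀ B) where
  toFun v := ∑ i, v i • Lop (ε := ε) i
  map_add' u v := by simp [add_smul, Finset.sum_add_distrib]
  map_smul' c v := by simp [smul_smul, Finset.smul_sum]

lemma fEnd_stdB (i : Fin n) : fEnd ε (stdB B n i) = Lop ε i := by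
  simp only [fEnd, LinearMap.coe_mk, AddHom.coe_mk, stdB, Pi.single_apply, ite_smul, one_smul,
    zero_smul]
  rw [Finset.sum_ite_eq' Finset.univ i (fun j => Lop ε j)]
  simp

/-- The representation of the ε-exterior algebra on the free module. -/
def Phi (hε : ε ^ 2 = 1) : EpsExt B n ε →ₐ[B] Module.End B (Finset (Fin n) →₀ B) :=
  RingQuot.liftAlgHom B ⟨TensorAlgebra.lift B (fEnd ε), by
    intro x y r
    induction r with
    | sq i =>
        simp only [map_mul, map_zero, TensorAlgebra.lift_ι_apply, fEnd_stdB,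
          Module.End.mul_eq_comp]
        rw [Lop_comp_self]
    | swap h =>
        simp only [map_mul, map_smul, TensorAlgebra.lift_ι_apply, fEnd_stdB,
          Module.End.mul_eq_comp]
        rw [Lop_comp_swap ε hε h]⟩

lemma Phi_epsGen (hε : ε ^ 2 = 1) (i : Fin n) : Phi ε hε (epsGen B n ε i) = Lop ε i := by
  rw [epsGen, Phi, RingQuot.liftAlgHom_mkAlgHom_apply, TensorAlgebra.lift_ι_apply, fEnd_stdB]

/-- Evaluation of the representation at `e_∅`. -/
def phi (hε : ε ^ 2 = 1) : EpsExt B n ε →ₗ[B] (Finset (Fin n) →₀ B) where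
  toFun x := Phi ε hε x (Finsupp.single ∅ 1)
  map_add' x y := by simp
  map_smul' c x := by simp

lemma phi_prodL (hε : ε ^ 2 = 1) : ∀ l : List (Fin n), l.Pairwise (· < ·) →
    phi ε hε (prodL B n ε l) = Finsupp.single l.toFinset 1 := by
  intro l
  induction l with
  | nil => intro _; simp [phi, prodL]
  | cons i t ih =>
      intro hs
      have ht : t.Pairwise (· < ·) := hs.of_cons
      have hit : ∀ b ∈ t, i < b := fun b hb => List.rel_of_pairwise_cons hs hb
      have hnot : i ∉ t.toFinset := by
        intro hmem
        exact absurd (hit i (List.mem_toFinset.mp hmem)) (lt_irrefl _)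
      have key : phi ε hε (prodL B n ε (i :: t)) = Lop ε i (Finsupp.single t.toFinset 1) := by
        have := ih ht
        simp only [phi, LinearMap.coe_mk, AddHom.coe_mk] at this ⊢
        rw [prodL_cons, map_mul, Module.End.mul_apply, this, Phi_epsGen]
      rw [key, Lop_single, if_neg hnot]
      have hfil : t.toFinset.filter (· < i) = ∅ := by
        apply Finset.filter_eq_empty_iff.mpr
        intro k hk
        exact not_lt.mpr (hit k (List.mem_toFinset.mp hk)).le
      rw [hfil, Finset.card_empty, pow_zero, one_smul, List.toFinset_cons]

lemma phi_eI (hε : ε ^ 2 = 1) (I : Finset (Fin n)) :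
    phi ε hε (eI B n ε I) = Finsupp.single I 1 := by
  have h1 : eI B n ε I = prodL B n ε (I.sort (· ≤ ·)) := rfl
  rw [h1, phi_prodL ε hε _ (I.sortedLT_sort.pairwise), Finset.sort_toFinset]

/-- The linear map sending `single I b` to `b • e_I`. -/
def TT : (Finset (Fin n) →₀ B) →ₗ[B] EpsExt B n ε :=
  Finsupp.linearCombination B (eI B n ε)

lemma phi_TT (hε : ε ^ 2 = 1) (x : Finset (Fin n) →₀ B) : phi ε hε (TT ε x) = x := by
  induction x using Finsupp.induction_linear with
  | zero => simp
  | add a b ha hb => rw [map_add, map_add, ha, hb]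
  | single I b =>
      rw [TT, Finsupp.linearCombination_single, map_smul, phi_eI ε hε, Finsupp.smul_single,
        smul_eq_mul, mul_one]

lemma TT_injective (hε : ε ^ 2 = 1) : Function.Injective (TT (B := B) (n := n) ε) :=
  Function.LeftInverse.injective (phi_TT ε hε)

/-! ### The `e_I` span everything -/

lemma epsGen_mul_mem (i : Fin n) {x : EpsExt B n ε}
    (hx : x ∈ Submodule.span B (Set.range (eI B n ε))) :
    epsGen B n ε i * x ∈ Submodule.span B (Set.range (eI B n ε)) := by
  induction hx using Submodule.span_induction with
  | mem y hy =>
      obtain ⟨I, rfl⟩ := hy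
      have hs := I.sortedLT_sort.pairwise
      have heq : eI B n ε I = prodL B n ε (I.sort (· ≤ ·)) := rfl
      by_cases hmem : i ∈ I.sort (· ≤ ·)
      · rw [heq, (epsGen_mul_prodL ε i _ hs).1 hmem]; exact Submodule.zero_mem _
      · obtain ⟨k, hk⟩ := (epsGen_mul_prodL ε i _ hs).2 hmem
        rw [heq, hk]
        apply Submodule.smul_mem
        have hsle : ((I.sort (· ≤ ·)).orderedInsert (· ≤ ·) i).Pairwise (· ≤ ·) :=
          List.Pairwise.orderedInsert i _ (I.pairwise_sort (· ≤ ·))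
        have hnd : ((I.sort (· ≤ ·)).orderedInsert (· ≤ ·) i).Nodup :=
          ((List.perm_orderedInsert _ i _).nodup_iff).mpr
            (List.nodup_cons.mpr ⟨hmem, I.sort_nodup _⟩)
        have hslt := (hsle.sortedLE.sortedLT_of_nodup hnd).pairwise
        rw [← eI_of_sorted ε hslt]
        exact Submodule.subset_span ⟨_, rfl⟩
  | zero => rw [mul_zero]; exact Submodule.zero_mem _
  | add a b _ _ ha hb => rw [mul_add]; exact Submodule.add_mem _ ha hb
  | smul c a _ ha => rw [mul_smul_comm]; exact Submodule.smul_mem _ _ ha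

lemma prodL_mul_mem : ∀ (l : List (Fin n)) {x : EpsExt B n ε},
    x ∈ Submodule.span B (Set.range (eI B n ε)) →
    prodL B n ε l * x ∈ Submodule.span B (Set.range (eI B n ε)) := by
  intro l
  induction l with
  | nil => intro x hx; rw [prodL_nil, one_mul]; exact hx
  | cons i t ih =>
      intro x hx
      rw [prodL_cons, mul_assoc]
      exact epsGen_mul_mem ε i (ih hx)

lemma mul_mem_span {x y : EpsExt B n ε}
    (hx : x ∈ Submodule.span B (Set.range (eI B n ε)))
    (hy : y ∈ Submodule.span B (Set.range (eI B n ε))) :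
    x * y ∈ Submodule.span B (Set.range (eI B n ε)) := by
  induction hx using Submodule.span_induction with
  | mem a ha => obtain ⟨I, rfl⟩ := ha; exact prodL_mul_mem ε _ hy
  | zero => rw [zero_mul]; exact Submodule.zero_mem _
  | add a b _ _ ha hb => rw [add_mul]; exact Submodule.add_mem _ ha hb
  | smul c a _ ha => rw [smul_mul_assoc]; exact Submodule.smul_mem _ _ ha

lemma span_eq_top : Submodule.span B (Set.range (eI B n ε)) = ⊤ := by
  rw [eq_top_iff]
  rintro x -
  obtain ⟨y, rfl⟩ := RingQuot.mkAlgHom_surjective B (epsRel B n ε) x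
  induction y using TensorAlgebra.induction with
  | algebraMap r =>
      rw [AlgHom.commutes, Algebra.algebraMap_eq_smul_one]
      apply Submodule.smul_mem
      have h1 : (1 : EpsExt B n ε) = eI B n ε ∅ := by simp [eI, Finset.sort_empty]
      rw [h1]; exact Submodule.subset_span ⟨∅, rfl⟩
  | ι v =>
      have hv : v = ∑ i, v i • stdB B n i := by
        funext j
        simp [stdB, Pi.single_apply, Finset.sum_apply, mul_ite]
      rw [hv, map_sum, map_sum]
      apply Submodule.sum_mem
      intro i _
      rw [map_smul, map_smul]
      apply Submodule.smul_mem
      have h2 : RingQuot.mkAlgHom B (epsRel B n ε) (ι B (stdB B n i)) = eI B n ε {i} := by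
        simp [eI, Finset.sort_singleton, epsGen]
      rw [h2]; exact Submodule.subset_span ⟨{i}, rfl⟩
  | mul a b ha hb => rw [map_mul]; exact mul_mem_span ε ha hb
  | add a b ha hb => rw [map_add]; exact Submodule.add_mem _ ha hb

lemma epsPower_eq (d : ℕ) :
    epsPower B n ε d
      = Submodule.map (TT (B := B) (n := n) ε)
          (Finsupp.supported B B {I : Finset (Fin n) | I.card = d}) := by
  rw [Finsupp.supported_eq_span_single, Submodule.map_span, epsPower]
  congr 1
  ext x
  constructor
  · rintro ⟨I, hI, rfl⟩
    exact ⟨Finsupp.single I 1, ⟨I, hI, rfl⟩, by simp [TT]⟩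
  · rintro ⟨y, ⟨I, hI, rfl⟩, rfl⟩
    exact ⟨I, hI, by simp [TT]⟩

end EpsAux

/-- Let `B` be a commutative ring with `ε² = 1` and `A` the ε-exterior
algebra of `Bⁿ`.  Then `A = ⊕_{d=0}^{n} Λᵈ` as `B`-modules, where `Λᵈ` is the span
of the `e_I` with `|I| = d`. -/
theorem stmt9 (B : Type*) [CommRing B] (n : ℕ) (ε : B) (hε : ε ^ 2 = 1) :
    DirectSum.IsInternal (fun d : Fin (n + 1) => epsPower B n ε d.val) := by
  rw [DirectSum.isInternal_submodule_iff_iSupIndep_and_iSup_eq_top]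
  have hinj := EpsAux.TT_injective (B := B) (n := n) ε hε
  have hmap : ∀ d' : Fin (n + 1), epsPower B n ε d'.val
      = Submodule.map (EpsAux.TT (B := B) (n := n) ε)
          (Finsupp.supported B B {I : Finset (Fin n) | I.card = d'.val}) :=
    fun d' => EpsAux.epsPower_eq ε d'.val
  constructor
  · intro d
    have hle : (⨆ j, ⨆ _ : j ≠ d,
          Finsupp.supported B B {I : Finset (Fin n) | I.card = j.val})
        ≤ Finsupp.supported B B {I : Finset (Fin n) | I.card ≠ d.val} := by
      refine iSup₂_le fun j hj => Finsupp.supported_mono ?_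
      intro I hI
      simp only [Set.mem_setOf_eq] at hI ⊢
      rw [hI]
      exact fun h => hj (Fin.ext h)
    have hdisj : Disjoint
        (Finsupp.supported B B {I : Finset (Fin n) | I.card = d.val})
        (Finsupp.supported B B {I : Finset (Fin n) | I.card ≠ d.val}) :=
      Finsupp.disjoint_supported_supported
        (Set.disjoint_left.mpr fun I hI hI2 => hI2 hI)
    have h0 : (Finsupp.supported B B {I : Finset (Fin n) | I.card = d.val}
        ⊓ ⨆ j, ⨆ _ : j ≠ d,
            Finsupp.supported B B {I : Finset (Fin n) | I.card = j.val}) = ⊥ :=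
      disjoint_iff.mp (hdisj.mono_right hle)
    simp_rw [hmap, ← Submodule.map_iSup]
    rw [disjoint_iff, ← Submodule.map_inf _ hinj, h0, Submodule.map_bot]
  · simp_rw [hmap, ← Submodule.map_iSup]
    have huniv : (⋃ d : Fin (n + 1), {I : Finset (Fin n) | I.card = d.val}) = Set.univ := by
      ext I
      simp only [Set.mem_iUnion, Set.mem_setOf_eq, Set.mem_univ, iff_true]
      exact ⟨⟨I.card, Nat.lt_succ_of_le (le_trans I.card_le_univ (by simp))⟩, rfl⟩
    rw [← Finsupp.supported_iUnion, huniv, Finsupp.supported_univ, Submodule.map_top,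
      EpsAux.TT, Finsupp.range_linearCombination, EpsAux.span_eq_top]
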